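/- arXiv:1004.1188 — 2 statements merged into one kernel-verified Lean document; each statement's English description precedes it below -/
import Mathlib

section
/- For every n ∈ ℕ, the polynomials X_n^{n+1,†} and Y_n^{n+1,†} are hyperholomorphic constants: on the open set {x ∈ ℝ³ : x₁² + x₂² > 0} one has D X_n^{n+1,†} = 0, D Y_n^{n+1,†} = 0, D̄ X_n^{n+1,†} = 0 and D̄ Y_n^{n+1,†} = 0, where D = ∂/∂x₀ + e₁ ∂/∂x₁ + e₂ ∂/∂x₂ and D̄ = ∂/∂x₀ − e₁ ∂/∂x₁ − e₂ ∂/∂x₂ are applied from the left. -/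
open MeasureTheory Quaternion Filter

noncomputable section

/-- Euclidean space ℝ³. -/
abbrev E3 := EuclideanSpace ℝ (Fin 3)

/-- The imaginary unit e₁ of the quaternions. -/
def e1 : ℍ[ℝ] := ⟨0,1,0,0⟩

/-- The imaginary unit e₂ of the quaternions. -/
def e2 : ℍ[ℝ] := ⟨0,0,1,0⟩

/-- The standard basis vectors of ℝ³. -/
def ed (i : Fin 3) : E3 := EuclideanSpace.single i (1:ℝ)

/-- The generalized Cauchy–Riemann operator D f = ∂₀f + e₁ ∂₁f + e₂ ∂₂f (left action). -/
def Dq (f : E3 → ℍ[ℝ]) (x : E3) : ℍ[ℝ] :=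
  fderiv ℝ f x (ed 0) + e1 * fderiv ℝ f x (ed 1) + e2 * fderiv ℝ f x (ed 2)

/-- The conjugate generalized Cauchy–Riemann operator D̄ f = ∂₀f − e₁ ∂₁f − e₂ ∂₂f. -/
def Dbar (f : E3 → ℍ[ℝ]) (x : E3) : ℍ[ℝ] :=
  fderiv ℝ f x (ed 0) - e1 * fderiv ℝ f x (ed 1) - e2 * fderiv ℝ f x (ed 2)

/-- The open unit ball B in ℝ³. -/
def B3 : Set E3 := Metric.ball 0 1

/-- The real inner product ⟨f,g⟩ = ∫_B Sc(f̄ g) dV. -/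
def qInner (f g : E3 → ℍ[ℝ]) : ℝ := ∫ x in B3, (star (f x) * g x).re

/-- The associated L²-norm ‖f‖ = ⟨f,f⟩^{1/2}. -/
def qNorm (f : E3 → ℍ[ℝ]) : ℝ := Real.sqrt (qInner f f)

/-- f takes values in the reduced quaternions A = span{1,e₁,e₂} on s. -/
def IsAValuedOn (f : E3 → ℍ[ℝ]) (s : Set E3) : Prop := ∀ x ∈ s, (f x).imK = 0

/-- f is an A-valued monogenic function on s: continuously real-differentiable with Df = 0. -/
def MonogenicOn (f : E3 → ℍ[ℝ]) (s : Set E3) : Prop :=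
  ContDiffOn ℝ 1 f s ∧ IsAValuedOn f s ∧ ∀ x ∈ s, Dq f x = 0

/-- h is a square-integrable hyperholomorphic constant on B with values in span{e₁,e₂}:
monogenic with vanishing hypercomplex derivative. -/
def IsVecHyperholConst (h : E3 → ℍ[ℝ]) : Prop :=
  ContDiffOn ℝ 1 h B3 ∧ (∀ x ∈ B3, (h x).re = 0 ∧ (h x).imK = 0) ∧
  (∀ x ∈ B3, Dq h x = 0) ∧ (∀ x ∈ B3, Dbar h x = 0) ∧
  MemLp h 2 (volume.restrict B3)

/-- The Legendre polynomial of degree n (Rodrigues formula). -/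
def legP (n : ℕ) (t : ℝ) : ℝ :=
  (1 / (2^n * n.factorial : ℝ)) * iteratedDeriv n (fun s : ℝ => (s^2 - 1)^n) t

/-- The associated Legendre functions P_n^l, with the conventions
P_n^{-1} = -(1/(n(n+1))) P_n^1 for n ≥ 1, P_0^{-1} = 0, and P_n^l = 0 for l ≥ n+1. -/
def aLeg (n : ℕ) (l : ℤ) (t : ℝ) : ℝ :=
  if 0 ≤ l then
    if l ≤ (n : ℤ) then Real.sqrt (1 - t^2) ^ l.toNat * iteratedDeriv l.toNat (legP n) t else 0
  else if l = -1 then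
    if n = 0 then 0
    else -(1 / ((n : ℝ) * ((n : ℝ) + 1))) * (Real.sqrt (1 - t^2) * iteratedDeriv 1 (legP n) t)
  else 0

/-- Chebyshev polynomial of the first kind, ℤ-indexed (so that T_{-k} = T_k). -/
def Tch (k : ℤ) (c : ℝ) : ℝ := (Polynomial.Chebyshev.T ℝ k).eval c

/-- Chebyshev polynomial of the second kind, ℤ-indexed (so that U_{-k-2} = -U_k, U_{-1} = 0). -/
def Uch (k : ℤ) (c : ℝ) : ℝ := (Polynomial.Chebyshev.U ℝ k).eval c

/-- The homogeneous monogenic polynomial X_n^{l,†}. -/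
def Xd (n l : ℕ) (x : E3) : ℍ[ℝ] :=
  let t : ℝ := x 0 / ‖x‖
  let c : ℝ := x 1 / Real.sqrt ((x 1)^2 + (x 2)^2)
  let s : ℝ := x 2 / Real.sqrt ((x 1)^2 + (x 2)^2)
  ‖x‖^n •
    (⟨((n : ℝ) + l + 1)/2 * aLeg n l t * Tch l c,
      (1/4) * aLeg n ((l : ℤ) + 1) t * Tch ((l : ℤ) + 1) c
        + (1/4) * (((n : ℝ) + l + 1) * ((n : ℝ) + l)) * aLeg n ((l : ℤ) - 1) t *
          (-(Tch ((l : ℤ) - 1) c)),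
      (1/4) * aLeg n ((l : ℤ) + 1) t * (s * Uch l c)
        + (1/4) * (((n : ℝ) + l + 1) * ((n : ℝ) + l)) * aLeg n ((l : ℤ) - 1) t *
          (s * Uch ((l : ℤ) - 2) c),
      0⟩ : ℍ[ℝ])

/-- The homogeneous monogenic polynomial Y_n^{m,†}. -/
def Yd (n m : ℕ) (x : E3) : ℍ[ℝ] :=
  let t : ℝ := x 0 / ‖x‖
  let c : ℝ := x 1 / Real.sqrt ((x 1)^2 + (x 2)^2)
  let s : ℝ := x 2 / Real.sqrt ((x 1)^2 + (x 2)^2)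
  ‖x‖^n •
    (⟨((n : ℝ) + m + 1)/2 * aLeg n m t * (s * Uch ((m : ℤ) - 1) c),
      (1/4) * aLeg n ((m : ℤ) + 1) t * (s * Uch m c)
        - (1/4) * (((n : ℝ) + m + 1) * ((n : ℝ) + m)) * aLeg n ((m : ℤ) - 1) t *
          (s * Uch ((m : ℤ) - 2) c),
      (1/4) * aLeg n ((m : ℤ) + 1) t * (-(Tch ((m : ℤ) + 1) c))
        - (1/4) * (((n : ℝ) + m + 1) * ((n : ℝ) + m)) * aLeg n ((m : ℤ) - 1) t *
          Tch ((m : ℤ) - 1) c,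
      0⟩ : ℍ[ℝ])

/-- The normalization X_n^{l,†,∗} of X_n^{l,†} in L²(B;A;ℝ). -/
def Xs (n l : ℕ) (x : E3) : ℍ[ℝ] := (qNorm (Xd n l))⁻¹ • Xd n l x

/-- The normalization Y_n^{m,†,∗} of Y_n^{m,†} in L²(B;A;ℝ). -/
def Ys (n m : ℕ) (x : E3) : ℍ[ℝ] := (qNorm (Yd n m))⁻¹ • Yd n m x

namespace Stmt7Aux

open Complex Polynomial

lemma e1_re : e1.re = 0 := rfl
lemma e1_imI : e1.imI = 1 := rfl
lemma e1_imJ : e1.imJ = 0 := rfl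
lemma e1_imK : e1.imK = 0 := rfl
lemma e2_re : e2.re = 0 := rfl
lemma e2_imI : e2.imI = 0 := rfl
lemma e2_imJ : e2.imJ = 1 := rfl
lemma e2_imK : e2.imK = 0 := rfl

lemma mk_smul_re (r a b c d : ℝ) : (r • (⟨a, b, c, d⟩ : ℍ[ℝ])).re = r * a := rfl
lemma mk_smul_imI (r a b c d : ℝ) : (r • (⟨a, b, c, d⟩ : ℍ[ℝ])).imI = r * b := rfl
lemma mk_smul_imJ (r a b c d : ℝ) : (r • (⟨a, b, c, d⟩ : ℍ[ℝ])).imJ = r * c := rfl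
lemma mk_smul_imK (r a b c d : ℝ) : (r • (⟨a, b, c, d⟩ : ℍ[ℝ])).imK = r * d := rfl

lemma iteratedDeriv_polyEval (k : ℕ) (p : ℝ[X]) :
    iteratedDeriv k (fun t => p.eval t) = fun t => (derivative^[k] p).eval t := by
  induction k generalizing p with
  | zero => simp
  | succ d hd =>
    rw [iteratedDeriv_succ', Function.iterate_succ_apply]
    rw [show deriv (fun t => p.eval t) = fun t => p.derivative.eval t from
      funext fun t => Polynomial.deriv p]
    exact hd _

lemma legP_eq_poly (n : ℕ) : ∃ q : ℝ[X], q.natDegree ≤ n ∧ legP n = fun t => q.eval t := by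
  refine ⟨C (1 / (2^n * n.factorial : ℝ)) * derivative^[n] ((X^2 - 1)^n), ?_, ?_⟩
  · refine (natDegree_mul_le).trans ?_
    have h1 : (derivative^[n] ((X^2 - 1 : ℝ[X])^n)).natDegree ≤ 2*n - n :=
      (Polynomial.natDegree_iterate_derivative _ n).trans (by
        gcongr
        refine (natDegree_pow_le).trans ?_
        have : (X^2 - 1 : ℝ[X]).natDegree ≤ 2 := by
          compute_degree
        nlinarith [this])
    simp only [natDegree_C, zero_add]
    omega
  · funext t
    have := congrFun (iteratedDeriv_polyEval n ((X^2 - 1 : ℝ[X])^n)) t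
    simp only [legP]
    rw [show (fun s : ℝ => (s^2 - 1)^n) = fun s => ((X^2-1:ℝ[X])^n).eval s by
      funext s; simp, this]
    simp

lemma iteratedDeriv_legP_const (n : ℕ) (t : ℝ) :
    iteratedDeriv n (legP n) t = iteratedDeriv n (legP n) 0 := by
  obtain ⟨q, hq, hleg⟩ := legP_eq_poly n
  rw [hleg, iteratedDeriv_polyEval]
  have hd : (derivative^[n] q).natDegree = 0 := by
    have := Polynomial.natDegree_iterate_derivative q n
    omega
  obtain ⟨a, ha⟩ := Polynomial.natDegree_eq_zero.mp hd
  simp [← ha]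

lemma exists_theta {c s : ℝ} (h : c^2 + s^2 = 1) : ∃ θ, Real.cos θ = c ∧ Real.sin θ = s := by
  have hc : -1 ≤ c ∧ c ≤ 1 := by constructor <;> nlinarith [sq_nonneg s]
  have hsin : Real.sin (Real.arccos c) = |s| := by
    rw [Real.sin_arccos]
    rw [show 1 - c^2 = s^2 by linarith, Real.sqrt_sq_eq_abs]
  rcases le_or_gt 0 s with hs | hs
  · exact ⟨Real.arccos c, Real.cos_arccos hc.1 hc.2, by rw [hsin, _root_.abs_of_nonneg hs]⟩
  · refine ⟨-Real.arccos c, by rw [Real.cos_neg]; exact Real.cos_arccos hc.1 hc.2, ?_⟩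
    rw [Real.sin_neg, hsin, abs_of_neg hs, neg_neg]

lemma pow_re_im (n : ℕ) (a b : ℝ) (h : 0 < a^2+b^2) :
    (((a:ℂ) + b*I)^n).re = Real.sqrt (a^2+b^2) ^ n * Tch n (a / Real.sqrt (a^2+b^2)) ∧
    (((a:ℂ) + b*I)^n).im = Real.sqrt (a^2+b^2) ^ n *
      ((b / Real.sqrt (a^2+b^2)) * Uch ((n:ℤ)-1) (a / Real.sqrt (a^2+b^2))) := by
  set ρ := Real.sqrt (a^2+b^2) with hρdef
  have hρ : 0 < ρ := Real.sqrt_pos.mpr h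
  have hsq : (a/ρ)^2 + (b/ρ)^2 = 1 := by
    field_simp
    rw [hρdef, Real.sq_sqrt h.le]
  obtain ⟨θ, hcos, hsin⟩ := exists_theta hsq
  have ha : a = ρ * Real.cos θ := by rw [hcos]; field_simp
  have hb : b = ρ * Real.sin θ := by rw [hsin]; field_simp
  have hz : ((a:ℂ) + b*I) = (ρ:ℂ) * Complex.exp (θ * I) := by
    rw [Complex.exp_mul_I, ha, hb]
    push_cast
    ring
  have hzn : (((a:ℂ) + b*I)^n) = (ρ:ℂ)^n * Complex.exp ((n*θ) * I) := by
    rw [hz, mul_pow, ← Complex.exp_nat_mul]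
    ring_nf
  constructor
  · rw [hzn]
    have : Tch n (a/ρ) = Real.cos (n * θ) := by
      rw [Tch, ← hcos, Polynomial.Chebyshev.T_real_cos]
      norm_num
    rw [this, show ((n:ℂ) * θ * I) = (↑((n:ℝ)*θ) * I) by push_cast; ring,
      show ((ρ:ℂ)^n) = ((ρ^n : ℝ):ℂ) by push_cast; ring, Complex.exp_mul_I,
      ← Complex.ofReal_cos, ← Complex.ofReal_sin]
    simp only [Complex.mul_re, Complex.add_re, Complex.add_im, Complex.mul_im,
      Complex.ofReal_re, Complex.ofReal_im, Complex.I_re, Complex.I_im]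
    ring
  · rw [hzn]
    have : (b/ρ) * Uch ((n:ℤ)-1) (a/ρ) = Real.sin (n * θ) := by
      rw [Uch, ← hcos, ← hsin, mul_comm, Polynomial.Chebyshev.U_real_cos]
      norm_num
    rw [this, show ((n:ℂ) * θ * I) = (↑((n:ℝ)*θ) * I) by push_cast; ring,
      show ((ρ:ℂ)^n) = ((ρ^n : ℝ):ℂ) by push_cast; ring, Complex.exp_mul_I,
      ← Complex.ofReal_cos, ← Complex.ofReal_sin]
    simp only [Complex.mul_re, Complex.add_re, Complex.add_im, Complex.mul_im,
      Complex.ofReal_re, Complex.ofReal_im, Complex.I_re, Complex.I_im]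
    ring

/-- The constant value of the n-th derivative of the Legendre polynomial. -/
def Cn (n : ℕ) : ℝ := iteratedDeriv n (legP n) 0

/-- The overall coefficient. -/
def KK (n : ℕ) : ℝ := (1/4) * (((n:ℝ) + (n+1:ℕ) + 1) * ((n:ℝ) + (n+1:ℕ))) * Cn n

/-- The linear map x ↦ x₁ + x₂ i. -/
def Lw : E3 →L[ℝ] ℂ :=
  Complex.ofRealCLM.comp (EuclideanSpace.proj 1) +
    Complex.I • Complex.ofRealCLM.comp (EuclideanSpace.proj 2)

lemma Lw_apply (x : E3) : Lw x = (x 1 : ℂ) + (x 2 : ℂ) * Complex.I := by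
  simp [Lw, PiLp.proj_apply]
  ring

lemma aLeg_big (n k : ℕ) (h : n < k) (t : ℝ) : aLeg n (k : ℤ) t = 0 := by
  unfold aLeg
  rw [if_pos (Int.ofNat_nonneg k), if_neg (by exact_mod_cast not_le.mpr h)]

lemma aLeg_self (n : ℕ) (t : ℝ) : aLeg n (n : ℤ) t = Real.sqrt (1 - t^2) ^ n * Cn n := by
  unfold aLeg
  rw [if_pos (Int.ofNat_nonneg n), if_pos le_rfl]
  rw [Int.toNat_natCast, iteratedDeriv_legP_const]
  rfl

lemma norm_E3 (x : E3) : ‖x‖ = Real.sqrt ((x 0)^2 + (x 1)^2 + (x 2)^2) := by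
  rw [EuclideanSpace.norm_eq]
  simp [Fin.sum_univ_three, Real.norm_eq_abs, sq_abs]

/-- The continuous linear map z ↦ (-K z.re) • e1 + (K z.im) • e2. -/
def LX (K : ℝ) : ℂ →L[ℝ] ℍ[ℝ] :=
  ((-K) • Complex.reCLM).smulRight e1 + (K • Complex.imCLM).smulRight e2

lemma LX_apply (K : ℝ) (z : ℂ) : LX K z = (-K * z.re) • e1 + (K * z.im) • e2 := by
  simp [LX]

/-- The continuous linear map z ↦ (-K z.im) • e1 + (-K z.re) • e2. -/
def LY (K : ℝ) : ℂ →L[ℝ] ℍ[ℝ] :=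
  ((-K) • Complex.imCLM).smulRight e1 + ((-K) • Complex.reCLM).smulRight e2

lemma LY_apply (K : ℝ) (z : ℂ) : LY K z = (-K * z.im) • e1 + (-K * z.re) • e2 := by
  simp [LY]

lemma hasFDerivAt_comp (n : ℕ) (L : ℂ →L[ℝ] ℍ[ℝ]) (x : E3) :
    HasFDerivAt (fun y => L (Lw y ^ n))
      (L.comp ((((n:ℂ) * (Lw x)^(n-1)) • Lw : E3 →L[ℝ] ℂ))) x :=
  L.hasFDerivAt.comp x ((hasDerivAt_pow n (Lw x)).comp_hasFDerivAt x Lw.hasFDerivAt)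

lemma Xd_eq (n : ℕ) (x : E3) (hx : 0 < (x 1)^2 + (x 2)^2) :
    Xd n (n+1) x = LX (KK n) (Lw x ^ n) := by
  have key := pow_re_im n (x 1) (x 2) hx
  set ρ := Real.sqrt ((x 1)^2 + (x 2)^2) with hρdef
  have hρ : 0 < ρ := Real.sqrt_pos.mpr hx
  have hnx : 0 < ‖x‖ := by
    rw [norm_E3]
    exact Real.sqrt_pos.mpr (by nlinarith [sq_nonneg (x 0)])
  have hnsq : ‖x‖^2 = (x 0)^2 + (x 1)^2 + (x 2)^2 := by
    rw [norm_E3]; exact Real.sq_sqrt (by nlinarith [sq_nonneg (x 0)])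
  have hsqrt : Real.sqrt (1 - (x 0 / ‖x‖)^2) = ρ / ‖x‖ := by
    rw [show 1 - (x 0/‖x‖)^2 = (ρ/‖x‖)^2 by
      rw [div_pow, div_pow, hρdef, Real.sq_sqrt hx.le]; field_simp; linarith]
    exact Real.sqrt_sq (by positivity)
  have hz1 : aLeg n ((n+1 : ℕ) : ℤ) (x 0 / ‖x‖) = 0 := aLeg_big n (n+1) (by omega) _
  have hz2 : aLeg n (((n+1 : ℕ) : ℤ) + 1) (x 0 / ‖x‖) = 0 := by
    rw [show (((n+1:ℕ):ℤ)+1) = ((n+2:ℕ):ℤ) by push_cast; ring]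
    exact aLeg_big n (n+2) (by omega) _
  have hm : (((n+1:ℕ):ℤ) - 1) = (n:ℤ) := by push_cast; ring
  rw [LX_apply, Lw_apply]
  unfold Xd
  dsimp only
  rw [hz1, hz2, hm, aLeg_self, hsqrt, key.1, key.2, div_pow]
  apply Quaternion.ext <;>
    simp only [mk_smul_re, mk_smul_imI, mk_smul_imJ, mk_smul_imK, Quaternion.re_smul, Quaternion.imI_smul, Quaternion.imJ_smul,
      Quaternion.imK_smul, Quaternion.re_add, Quaternion.imI_add, Quaternion.imJ_add,
      Quaternion.imK_add, e1_re, e1_imI, e1_imJ, e1_imK, e2_re, e2_imI, e2_imJ, e2_imK, KK, smul_eq_mul] <;>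
    field_simp <;> push_cast <;> (try ring) <;>
    (rw [show Real.sqrt (x 2 ^ 2 + x 1 ^ 2) = ρ from by rw [hρdef, add_comm]]; ring)

lemma Yd_eq (n : ℕ) (x : E3) (hx : 0 < (x 1)^2 + (x 2)^2) :
    Yd n (n+1) x = LY (KK n) (Lw x ^ n) := by
  have key := pow_re_im n (x 1) (x 2) hx
  set ρ := Real.sqrt ((x 1)^2 + (x 2)^2) with hρdef
  have hρ : 0 < ρ := Real.sqrt_pos.mpr hx
  have hnx : 0 < ‖x‖ := by
    rw [norm_E3]
    exact Real.sqrt_pos.mpr (by nlinarith [sq_nonneg (x 0)])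
  have hnsq : ‖x‖^2 = (x 0)^2 + (x 1)^2 + (x 2)^2 := by
    rw [norm_E3]; exact Real.sq_sqrt (by nlinarith [sq_nonneg (x 0)])
  have hsqrt : Real.sqrt (1 - (x 0 / ‖x‖)^2) = ρ / ‖x‖ := by
    rw [show 1 - (x 0/‖x‖)^2 = (ρ/‖x‖)^2 by
      rw [div_pow, div_pow, hρdef, Real.sq_sqrt hx.le]; field_simp; linarith]
    exact Real.sqrt_sq (by positivity)
  have hz1 : aLeg n ((n+1 : ℕ) : ℤ) (x 0 / ‖x‖) = 0 := aLeg_big n (n+1) (by omega) _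
  have hz2 : aLeg n (((n+1 : ℕ) : ℤ) + 1) (x 0 / ‖x‖) = 0 := by
    rw [show (((n+1:ℕ):ℤ)+1) = ((n+2:ℕ):ℤ) by push_cast; ring]
    exact aLeg_big n (n+2) (by omega) _
  have hm : (((n+1:ℕ):ℤ) - 1) = (n:ℤ) := by push_cast; ring
  rw [LY_apply, Lw_apply]
  unfold Yd
  dsimp only
  rw [hz1, hz2, hm, aLeg_self, hsqrt, key.1, key.2, div_pow]
  apply Quaternion.ext <;>
    simp only [mk_smul_re, mk_smul_imI, mk_smul_imJ, mk_smul_imK, Quaternion.re_smul, Quaternion.imI_smul, Quaternion.imJ_smul,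
      Quaternion.imK_smul, Quaternion.re_add, Quaternion.imI_add, Quaternion.imJ_add,
      Quaternion.imK_add, e1_re, e1_imI, e1_imJ, e1_imK, e2_re, e2_imI, e2_imJ, e2_imK, KK, smul_eq_mul] <;>
    field_simp <;> push_cast <;> (try ring) <;>
    (rw [show Real.sqrt (x 2 ^ 2 + x 1 ^ 2) = ρ from by rw [hρdef, add_comm]]; ring)

end Stmt7Aux

open Stmt7Aux in
/-- X_n^{n+1,†} and Y_n^{n+1,†} are hyperholomorphic constants. -/
theorem stmt7 (n : ℕ) (x : E3) (hx : (x 1)^2 + (x 2)^2 > 0) :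
    Dq (Xd n (n + 1)) x = 0 ∧ Dq (Yd n (n + 1)) x = 0 ∧
    Dbar (Xd n (n + 1)) x = 0 ∧ Dbar (Yd n (n + 1)) x = 0 := by
  have hU : IsOpen {y : E3 | 0 < (y 1)^2 + (y 2)^2} := by
    have hc : Continuous fun y : E3 => (y 1)^2 + (y 2)^2 :=
      ((EuclideanSpace.proj (1 : Fin 3)).continuous.pow 2).add
        ((EuclideanSpace.proj (2 : Fin 3)).continuous.pow 2)
    exact isOpen_lt continuous_const hc
  have hxU : x ∈ {y : E3 | 0 < (y 1)^2 + (y 2)^2} := hx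
  set d : ℂ := (n : ℂ) * (Lw x)^(n-1) with hd
  have hXev : Xd n (n+1) =ᶠ[nhds x] fun y => LX (KK n) (Lw y ^ n) :=
    Filter.eventuallyEq_of_mem (hU.mem_nhds hxU) fun y hy => Xd_eq n y hy
  have hYev : Yd n (n+1) =ᶠ[nhds x] fun y => LY (KK n) (Lw y ^ n) :=
    Filter.eventuallyEq_of_mem (hU.mem_nhds hxU) fun y hy => Yd_eq n y hy
  have hfX : fderiv ℝ (Xd n (n+1)) x = (LX (KK n)).comp (d • Lw) := by
    rw [hXev.fderiv_eq]; exact (hasFDerivAt_comp n (LX (KK n)) x).fderiv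
  have hfY : fderiv ℝ (Yd n (n+1)) x = (LY (KK n)).comp (d • Lw) := by
    rw [hYev.fderiv_eq]; exact (hasFDerivAt_comp n (LY (KK n)) x).fderiv
  have hLw0 : Lw (ed 0) = 0 := by
    rw [Lw_apply]; simp [ed, EuclideanSpace.single_apply]
  have hLw1 : Lw (ed 1) = 1 := by
    rw [Lw_apply]; simp [ed, EuclideanSpace.single_apply]
  have hLw2 : Lw (ed 2) = Complex.I := by
    rw [Lw_apply]; simp [ed, EuclideanSpace.single_apply]
  refine ⟨?_, ?_, ?_, ?_⟩
  · unfold Dq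
    rw [hfX]
    simp only [ContinuousLinearMap.comp_apply, ContinuousLinearMap.smul_apply,
      hLw0, hLw1, hLw2, smul_zero, smul_eq_mul, mul_one, map_zero, LX_apply]
    apply Quaternion.ext <;>
      simp [e1_re, e1_imI, e1_imJ, e1_imK, e2_re, e2_imI, e2_imJ, e2_imK, Complex.mul_re, Complex.mul_im, Complex.I_re, Complex.I_im,
        Quaternion.re_mul, Quaternion.imI_mul, Quaternion.imJ_mul, Quaternion.imK_mul] <;>
      ring
  · unfold Dq
    rw [hfY]
    simp only [ContinuousLinearMap.comp_apply, ContinuousLinearMap.smul_apply,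
      hLw0, hLw1, hLw2, smul_zero, smul_eq_mul, mul_one, map_zero, LY_apply]
    apply Quaternion.ext <;>
      simp [e1_re, e1_imI, e1_imJ, e1_imK, e2_re, e2_imI, e2_imJ, e2_imK, Complex.mul_re, Complex.mul_im, Complex.I_re, Complex.I_im,
        Quaternion.re_mul, Quaternion.imI_mul, Quaternion.imJ_mul, Quaternion.imK_mul] <;>
      ring
  · unfold Dbar
    rw [hfX]
    simp only [ContinuousLinearMap.comp_apply, ContinuousLinearMap.smul_apply,
      hLw0, hLw1, hLw2, smul_zero, smul_eq_mul, mul_one, map_zero, LX_apply]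
    apply Quaternion.ext <;>
      simp [e1_re, e1_imI, e1_imJ, e1_imK, e2_re, e2_imI, e2_imJ, e2_imK, Complex.mul_re, Complex.mul_im, Complex.I_re, Complex.I_im,
        Quaternion.re_mul, Quaternion.imI_mul, Quaternion.imJ_mul, Quaternion.imK_mul] <;>
      ring
  · unfold Dbar
    rw [hfY]
    simp only [ContinuousLinearMap.comp_apply, ContinuousLinearMap.smul_apply,
      hLw0, hLw1, hLw2, smul_zero, smul_eq_mul, mul_one, map_zero, LY_apply]
    apply Quaternion.ext <;>
      simp [e1_re, e1_imI, e1_imJ, e1_imK, e2_re, e2_imI, e2_imJ, e2_imK, Complex.mul_re, Complex.mul_im, Complex.I_re, Complex.I_im,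
        Quaternion.re_mul, Quaternion.imI_mul, Quaternion.imJ_mul, Quaternion.imK_mul] <;>
      ring
end
end

section
/- (Bohr's theorem) Let f(z) = Σ_{n=0}^∞ a_n z^n be analytic on the open unit disk 𝔻 ⊂ ℂ with |f(z)| < 1 for all z ∈ 𝔻. Then Σ_{n=0}^∞ |a_n| |z|^n < 1 for every z with |z| < 1/3. -/
open Filter

noncomputable section

open Complex MeasureTheory intervalIntegral Real Set

namespace BohrProof

lemma orth' (c : ℂ) (j : ℤ) (hc : c = j) : (∫ t in (0:ℝ)..(2*π), Complex.exp (c * t * I))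
    = if j = 0 then ((2*π : ℝ) : ℂ) else 0 := by
  subst hc
  by_cases hj : j = 0
  · simp [hj, Complex.ofReal_mul]
  · simp only [hj, if_false]
    have h0 : (j : ℂ) * I ≠ 0 := by
      simp [Complex.I_ne_zero, hj]
    have : ∀ t : ℝ, Complex.exp ((j:ℂ) * t * I) = Complex.exp (((j:ℂ) * I) * t) := by
      intro t; ring_nf
    simp_rw [this]
    rw [integral_exp_mul_complex h0]
    have h1 : Complex.exp ((j:ℂ) * I * (2*π)) = 1 := by
      rw [show (j:ℂ) * I * (2*π) = j * (2 * π * I) by ring]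
      exact Complex.exp_int_mul_two_pi_mul_I j
    simp [h1]

lemma normexp (j : ℤ) (t : ℝ) : ‖Complex.exp (j * t * I)‖ = 1 := by
  have : ((j:ℂ) * t * I) = ((j * t : ℝ) : ℂ) * I := by push_cast; ring
  rw [this, Complex.norm_exp_ofReal_mul_I]

lemma summable_aux {a : ℕ → ℂ} (h : ∀ s : ℝ, 0 < s → s < 1 → Summable (fun n => a n * (s:ℂ)^n)) :
    ∀ r : ℝ, 0 ≤ r → r < 1 → Summable (fun n => ‖a n‖ * r ^ n) := by
  intro r hr0 hr1
  set s : ℝ := (r + 1) / 2 with hs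
  have hs0 : 0 < s := by positivity
  have hrs : r < s := by simp only [hs]; linarith
  have hs1 : s < 1 := by simp only [hs]; linarith
  have hsum := h s hs0 hs1
  have htend : Tendsto (fun n => ‖a n‖ * s ^ n) atTop (nhds 0) := by
    have := hsum.tendsto_atTop_zero
    have h2 : Tendsto (fun n => ‖a n * (s:ℂ)^n‖) atTop (nhds 0) := by
      simpa using this.norm
    refine h2.congr fun n => ?_
    rw [norm_mul, norm_pow]
    simp [abs_of_pos hs0]
  obtain ⟨C, hC⟩ : ∃ C, ∀ n, ‖a n‖ * s ^ n ≤ C := by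
    obtain ⟨C, hC⟩ := htend.bddAbove_range
    exact ⟨C, fun n => hC ⟨n, rfl⟩⟩
  have hgeo : Summable (fun n : ℕ => C * (r / s) ^ n) := by
    refine (summable_geometric_of_lt_one (by positivity) ?_).mul_left C
    rw [div_lt_one hs0]; exact hrs
  refine Summable.of_nonneg_of_le (fun n => by positivity) (fun n => ?_) hgeo
  have h1 : ‖a n‖ * r ^ n = (‖a n‖ * s ^ n) * (r / s) ^ n := by
    have h2 : s ^ n * (r / s) ^ n = r ^ n := by
      rw [← mul_pow, mul_comm, div_mul_cancel₀ _ hs0.ne']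
    rw [mul_assoc, h2]
  rw [h1]
  exact mul_le_mul_of_nonneg_right (hC n) (by positivity)

section helpers
variable {f : ℂ → ℂ} {a : ℕ → ℂ}
  (hf : ContinuousOn f (Metric.ball 0 1))
  (hsum : ∀ z ∈ Metric.ball (0 : ℂ) 1, HasSum (fun n : ℕ => a n * z^n) (f z))
  (hb : ∀ z ∈ Metric.ball (0 : ℂ) 1, ‖f z‖ < 1)

include hsum in
lemma core {r : ℝ} (hr0 : 0 < r) (hr1 : r < 1) (k : ℤ) :
    (∫ t in (0:ℝ)..(2*π), f (r * Complex.exp (t * I)) * Complex.exp (k * t * I))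
      = ∑' m : ℕ, (a m * r ^ m *
          ∫ t in (0:ℝ)..(2*π), Complex.exp ((((m:ℤ) + k : ℤ) : ℂ) * t * I)) := by
  set F : ℕ → ℝ → ℂ := fun m t => a m * r ^ m * Complex.exp ((((m:ℤ) + k : ℤ) : ℂ) * t * I)
    with hF
  have hz : ∀ t : ℝ, (r : ℂ) * Complex.exp (t * I) ∈ Metric.ball (0:ℂ) 1 := by
    intro t
    rw [mem_ball_zero_iff, norm_mul]
    have h1 : ‖Complex.exp ((t:ℂ) * I)‖ = 1 := by
      rw [Complex.norm_exp_ofReal_mul_I]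
    rw [h1, mul_one, Complex.norm_real, Real.norm_of_nonneg hr0.le]
    exact hr1
  have HS : ∀ t : ℝ, HasSum (fun m => F m t)
      (f ((r:ℂ) * Complex.exp (t * I)) * Complex.exp (k * t * I)) := by
    intro t
    have h0 := (hsum _ (hz t)).mul_right (Complex.exp (k * t * I))
    have hterm : (fun m : ℕ => a m * ((r:ℂ) * Complex.exp (t * I)) ^ m
        * Complex.exp (k * t * I)) = fun m => F m t := by
      funext m
      have he : Complex.exp ((m:ℂ) * ((t:ℂ) * I)) * Complex.exp ((k:ℂ) * t * I)
          = Complex.exp ((((m:ℤ) + k : ℤ) : ℂ) * t * I) := by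
        rw [← Complex.exp_add]; congr 1; push_cast; ring
      rw [hF]
      simp only []
      rw [mul_pow, ← Complex.exp_nat_mul]
      calc a m * ((r:ℂ)^m * Complex.exp ((m:ℂ) * ((t:ℂ) * I))) * Complex.exp ((k:ℂ) * t * I)
          = a m * (r:ℂ)^m * (Complex.exp ((m:ℂ) * ((t:ℂ) * I)) * Complex.exp ((k:ℂ) * t * I)) := by
            ring
        _ = a m * (r:ℂ)^m * Complex.exp ((((m:ℤ) + k : ℤ) : ℂ) * t * I) := by rw [he]
    rwa [hterm] at h0
  have hFc : ∀ m, Continuous (F m) := by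
    intro m
    apply Continuous.mul continuous_const
    exact Complex.continuous_exp.comp
      (((continuous_const.mul Complex.continuous_ofReal).mul continuous_const))
  have hInt : ∀ m, Integrable (F m) (volume.restrict (Ioc (0:ℝ) (2*π))) :=
    fun m => ((hFc m).integrableOn_Ioc : IntegrableOn (F m) _ _)
  have hnorm : ∀ m, (∫ t in Ioc (0:ℝ) (2*π), ‖F m t‖) = (2*π) * (‖a m‖ * r ^ m) := by
    intro m
    have h1 : ∀ t : ℝ, ‖F m t‖ = ‖a m‖ * r ^ m := by
      intro t
      rw [hF]
      simp only []
      rw [norm_mul, norm_mul, norm_pow, Complex.norm_real, Real.norm_of_nonneg hr0.le]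
      have := normexp ((m:ℤ) + k) t
      rw [this, mul_one]
    simp_rw [h1]
    rw [setIntegral_const, measureReal_def, Real.volume_Ioc, smul_eq_mul, sub_zero,
      ENNReal.toReal_ofReal (by positivity : (0:ℝ) ≤ 2*π)]
  have hsummable : Summable (fun m => ‖a m‖ * r ^ m) := by
    apply summable_aux (a := a) ?_ r hr0.le hr1
    intro s hs0 hs1
    refine (hsum (s:ℂ) ?_).summable
    rw [mem_ball_zero_iff, Complex.norm_real, Real.norm_of_nonneg hs0.le]
    exact hs1
  have hSum2 : Summable (fun m => ∫ t in Ioc (0:ℝ) (2*π), ‖F m t‖) := by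
    simp_rw [hnorm]
    exact hsummable.mul_left _
  have key := integral_tsum_of_summable_integral_norm hInt hSum2
  have h2pi : (0:ℝ) ≤ 2*π := by positivity
  calc (∫ t in (0:ℝ)..(2*π), f (r * Complex.exp (t * I)) * Complex.exp (k * t * I))
      = ∫ t in Ioc (0:ℝ) (2*π), f (r * Complex.exp (t * I)) * Complex.exp (k * t * I) := by
        rw [integral_of_le h2pi]
    _ = ∫ t in Ioc (0:ℝ) (2*π), ∑' m, F m t := by
        apply setIntegral_congr_ae measurableSet_Ioc
        filter_upwards with t _
        exact ((HS t).tsum_eq).symm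
    _ = ∑' m, ∫ t in Ioc (0:ℝ) (2*π), F m t := key.symm
    _ = ∑' m : ℕ, (a m * r ^ m *
          ∫ t in (0:ℝ)..(2*π), Complex.exp ((((m:ℤ) + k : ℤ) : ℂ) * t * I)) := by
        congr 1
        funext m
        rw [← integral_of_le h2pi, hF]
        simp only []
        rw [intervalIntegral.integral_const_mul]

include hsum in
lemma valNeg {r : ℝ} (hr0 : 0 < r) (hr1 : r < 1) (n : ℕ) :
    (∫ t in (0:ℝ)..(2*π), f (r * Complex.exp (t * I)) * Complex.exp ((-(n:ℤ)) * t * I))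
      = (2*π : ℝ) * (a n * r ^ n) := by
  have hcore := core hsum hr0 hr1 (-(n:ℤ))
  push_cast at hcore ⊢
  rw [hcore]
  have h1 : ∀ m : ℕ, (a m * (r:ℂ) ^ m *
      ∫ t in (0:ℝ)..(2*π), Complex.exp (((m:ℂ) - (n:ℂ)) * t * I))
      = if m = n then (2*π : ℝ) * (a n * (r:ℂ) ^ n) else 0 := by
    intro m
    rw [orth' ((m:ℂ) - (n:ℂ)) ((m:ℤ) - (n:ℤ)) (by push_cast; ring)]
    by_cases h : m = n
    · subst h; simp; ring
    · have : ((m:ℤ) - (n:ℤ)) ≠ 0 := by omega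
      simp [this, h]
  calc _ = ∑' m : ℕ, if m = n then (2*π : ℝ) * (a n * (r:ℂ) ^ n) else 0 := tsum_congr h1
    _ = _ := by rw [tsum_eq_single n (fun m hm => by simp [hm])]; push_cast; simp

include hsum in
lemma valPos {r : ℝ} (hr0 : 0 < r) (hr1 : r < 1) (n : ℕ) (hn : 1 ≤ n) :
    (∫ t in (0:ℝ)..(2*π), f (r * Complex.exp (t * I)) * Complex.exp ((n:ℤ) * t * I)) = 0 := by
  have hcore := core hsum hr0 hr1 (n:ℤ)
  push_cast at hcore ⊢
  rw [hcore]
  have h1 : ∀ m : ℕ, (a m * (r:ℂ) ^ m *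
      ∫ t in (0:ℝ)..(2*π), Complex.exp (((m:ℂ) + (n:ℂ)) * t * I)) = 0 := by
    intro m
    rw [orth' ((m:ℂ) + (n:ℂ)) ((m:ℤ) + (n:ℤ)) (by push_cast; ring)]
    have : ((m:ℤ) + (n:ℤ)) ≠ 0 := by omega
    simp [this]
  rw [tsum_congr h1, tsum_zero]

include hf hsum hb in
lemma claim_bound {r : ℝ} (hr0 : 0 < r) (hr1 : r < 1) (n : ℕ) (hn : 1 ≤ n) :
    ‖a 0‖ + ‖a n‖ * r ^ n / 2 ≤ 1 := by
  classical
  -- unit vectors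
  set u : ℂ := if a 0 = 0 then 1 else (‖a 0‖ : ℂ)⁻¹ * a 0 with hu_def
  have hu : ‖u‖ = 1 := by
    rw [hu_def]
    split_ifs with h
    · simp
    · rw [norm_mul, norm_inv, Complex.norm_real, Real.norm_of_nonneg (norm_nonneg _)]
      rw [inv_mul_cancel₀ (norm_ne_zero_iff.mpr h)]
  have hu0 : a 0 = (‖a 0‖ : ℂ) * u := by
    rw [hu_def]
    split_ifs with h
    · simp [h]
    · rw [← mul_assoc, ← Complex.ofReal_inv]
      rw [← Complex.ofReal_mul]
      have : ‖a 0‖ * (‖a 0‖)⁻¹ = 1 := mul_inv_cancel₀ (norm_ne_zero_iff.mpr h)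
      rw [this]; simp
  set v : ℂ := if a n = 0 then u else (‖a n‖ : ℂ)⁻¹ * a n with hv_def
  have hv : ‖v‖ = 1 := by
    rw [hv_def]
    split_ifs with h
    · exact hu
    · rw [norm_mul, norm_inv, Complex.norm_real, Real.norm_of_nonneg (norm_nonneg _)]
      rw [inv_mul_cancel₀ (norm_ne_zero_iff.mpr h)]
  have hvn : a n = (‖a n‖ : ℂ) * v := by
    rw [hv_def]
    split_ifs with h
    · simp [h]
    · rw [← mul_assoc, ← Complex.ofReal_inv, ← Complex.ofReal_mul]
      have : ‖a n‖ * (‖a n‖)⁻¹ = 1 := mul_inv_cancel₀ (norm_ne_zero_iff.mpr h)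
      rw [this]; simp
  have hvne : v ≠ 0 := fun h => by simp [h] at hv
  set c : ℂ := starRingEnd ℂ (u * v⁻¹) with hc_def
  have hc : ‖c‖ = 1 := by
    rw [hc_def, RCLike.norm_conj, norm_mul, norm_inv, hu, hv]; norm_num
  have hcan : (starRingEnd ℂ) c * a n = (‖a n‖ : ℂ) * u := by
    rw [hc_def, Complex.conj_conj]
    nth_rewrite 1 [hvn]
    field_simp
  -- the curve
  have hz : ∀ t : ℝ, (r : ℂ) * Complex.exp (t * I) ∈ Metric.ball (0:ℂ) 1 := by
    intro t
    rw [Metric.mem_ball, dist_zero_right, norm_mul]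
    have h1 : ‖Complex.exp ((t:ℂ) * I)‖ = 1 := by
      rw [Complex.norm_exp_ofReal_mul_I]
    rw [h1, mul_one, Complex.norm_real, Real.norm_of_nonneg hr0.le]
    exact hr1
  set g : ℝ → ℂ := fun t => f ((r:ℂ) * Complex.exp (t * I)) with hg_def
  have hcurve : Continuous fun t : ℝ => (r:ℂ) * Complex.exp ((t:ℂ) * I) :=
    continuous_const.mul (Complex.continuous_exp.comp
      (Complex.continuous_ofReal.mul continuous_const))
  have hgc : Continuous g := hf.comp_continuous hcurve hz
  have hgle : ∀ t, ‖g t‖ ≤ 1 := fun t => (hb _ (hz t)).le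
  set E : ℝ → ℂ := fun t => Complex.exp ((n:ℂ) * t * I) with hE_def
  have hEc : Continuous E := Complex.continuous_exp.comp
    ((continuous_const.mul Complex.continuous_ofReal).mul continuous_const)
  set Em : ℝ → ℂ := fun t => Complex.exp (-(n:ℂ) * t * I) with hEm_def
  have hEmc : Continuous Em := Complex.continuous_exp.comp
    ((continuous_const.mul Complex.continuous_ofReal).mul continuous_const)
  have hnormE : ∀ t, ‖E t‖ = 1 := by
    intro t
    have := normexp (n:ℤ) t
    rw [hE_def]
    push_cast at this ⊢
    exact this
  have hconjE : ∀ t, (starRingEnd ℂ) (E t) = Em t := by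
    intro t
    rw [hE_def, hEm_def]
    simp only [← Complex.exp_conj, map_mul, Complex.conj_I, Complex.conj_ofReal,
      Complex.conj_natCast]
    congr 1
    ring
  -- values of the three integrals
  have h2pi : (0:ℝ) ≤ 2*π := by positivity
  have hI0 : (∫ t in (0:ℝ)..(2*π), g t) = (2*π:ℝ) * a 0 := by
    have h0 := valNeg hsum hr0 hr1 0
    push_cast at h0
    simpa using h0
  have hIpos : (∫ t in (0:ℝ)..(2*π), g t * E t) = 0 := by
    have h0 := valPos hsum hr0 hr1 n hn
    push_cast at h0
    rw [hg_def, hE_def]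
    exact h0
  have hIneg : (∫ t in (0:ℝ)..(2*π), g t * Em t) = (2*π:ℝ) * (a n * r ^ n) := by
    have h0 := valNeg hsum hr0 hr1 n
    push_cast at h0 ⊢
    rw [hg_def, hEm_def]
    convert h0 using 3 with t
  -- the kernel integrand
  set G : ℝ → ℂ := fun t => g t * (1 + (c * E t + (starRingEnd ℂ) (c * E t))/2) with hG_def
  have hGsplit : ∀ t, G t = g t + (c/2) * (g t * E t) + ((starRingEnd ℂ) c/2) * (g t * Em t) := by
    intro t
    rw [hG_def]
    simp only [map_mul, hconjE]
    ring
  have hGc : Continuous G := by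
    apply hgc.mul
    apply continuous_const.add
    apply Continuous.div_const
    exact (continuous_const.mul hEc).add (Complex.continuous_conj.comp (continuous_const.mul hEc))
  have hint1 : IntervalIntegrable g volume 0 (2*π) := hgc.intervalIntegrable _ _
  have hint2 : IntervalIntegrable (fun t => (c/2) * (g t * E t)) volume 0 (2*π) :=
    (continuous_const.mul (hgc.mul hEc)).intervalIntegrable _ _
  have hint3 : IntervalIntegrable (fun t => ((starRingEnd ℂ) c/2) * (g t * Em t)) volume 0 (2*π) :=
    (continuous_const.mul (hgc.mul hEmc)).intervalIntegrable _ _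
  have hIval : (∫ t in (0:ℝ)..(2*π), G t)
      = (2*π:ℝ) * (a 0 + (starRingEnd ℂ) c * (a n * r ^ n) / 2) := by
    have : (∫ t in (0:ℝ)..(2*π), G t)
        = (∫ t in (0:ℝ)..(2*π), g t) + ((∫ t in (0:ℝ)..(2*π), (c/2) * (g t * E t))
          + (∫ t in (0:ℝ)..(2*π), ((starRingEnd ℂ) c/2) * (g t * Em t))) := by
      rw [← intervalIntegral.integral_add hint2 hint3,
        ← intervalIntegral.integral_add hint1 (hint2.add hint3)]
      apply intervalIntegral.integral_congr
      intro t _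
      rw [hGsplit t]
      ring
    rw [this, intervalIntegral.integral_const_mul, intervalIntegral.integral_const_mul,
      hI0, hIpos, hIneg]
    ring
  -- pointwise bound on the kernel
  have hker : ∀ t, (1 : ℂ) + (c * E t + (starRingEnd ℂ) (c * E t))/2
      = ((1 + (c * E t).re : ℝ) : ℂ) := by
    intro t
    rw [Complex.add_conj]
    push_cast
    ring
  have hkpos : ∀ t, 0 ≤ 1 + (c * E t).re := by
    intro t
    have h1 : |(c * E t).re| ≤ ‖c * E t‖ := Complex.abs_re_le_norm _
    have h2 : ‖c * E t‖ = 1 := by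
      rw [norm_mul]
      have := hnormE t
      rw [this, mul_one]
      rw [hc]
    rw [h2] at h1
    have := (abs_le.mp h1).1
    linarith
  have hGnorm : ∀ t, ‖G t‖ ≤ 1 + (c * E t).re := by
    intro t
    rw [hG_def]
    simp only []
    rw [norm_mul, hker t, Complex.norm_real, Real.norm_of_nonneg (hkpos t)]
    calc ‖g t‖ * (1 + (c * E t).re) ≤ 1 * (1 + (c * E t).re) :=
          mul_le_mul_of_nonneg_right (hgle t) (hkpos t)
      _ = 1 + (c * E t).re := one_mul _
  -- integral of the kernel bound
  have hEint : (∫ t in (0:ℝ)..(2*π), E t) = 0 := by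
    have := orth' ((n:ℂ)) (n:ℤ) (by push_cast; ring) 
    rw [hE_def]
    have hn0 : (n:ℤ) ≠ 0 := by omega
    have hn0' : n ≠ 0 := by omega
    simpa [hn0, hn0'] using this
  have hreint : (∫ t in (0:ℝ)..(2*π), (1 + (c * E t).re)) = 2*π := by
    rw [intervalIntegral.integral_add (continuous_const.intervalIntegrable _ _)
      ((by exact (Complex.continuous_re.comp (continuous_const.mul hEc)).intervalIntegrable _ _ :
        IntervalIntegrable (fun t => (c * E t).re) volume 0 (2*π)))]
    have h1 : (∫ t in (0:ℝ)..(2*π), (1:ℝ)) = 2*π := by simp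
    have h2 : (∫ t in (0:ℝ)..(2*π), (c * E t).re) = 0 := by
      have hintc : IntervalIntegrable (fun t => c * E t) volume 0 (2*π) :=
        (continuous_const.mul hEc).intervalIntegrable 0 (2*π)
      have hcomm := Complex.reCLM.intervalIntegral_comp_comm hintc
      simp only [Complex.reCLM_apply] at hcomm
      rw [hcomm, intervalIntegral.integral_const_mul, hEint, mul_zero]
      simp
    rw [h1, h2, add_zero]
  have hbound : ‖∫ t in (0:ℝ)..(2*π), G t‖ ≤ 2*π := by
    calc ‖∫ t in (0:ℝ)..(2*π), G t‖ ≤ ∫ t in (0:ℝ)..(2*π), ‖G t‖ :=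
          intervalIntegral.norm_integral_le_integral_norm h2pi
      _ ≤ ∫ t in (0:ℝ)..(2*π), (1 + (c * E t).re) := by
          apply intervalIntegral.integral_mono_on h2pi (hGc.norm.intervalIntegrable _ _)
            ((by exact (continuous_const.add (Complex.continuous_re.comp (continuous_const.mul hEc))).intervalIntegrable _ _ :
              IntervalIntegrable (fun t => 1 + (c * E t).re) volume 0 (2*π)))
          intro t _
          exact hGnorm t
      _ = 2*π := hreint
  -- compute the norm of the value
  have hval2 : a 0 + (starRingEnd ℂ) c * (a n * r ^ n) / 2
      = ((‖a 0‖ + ‖a n‖ * r ^ n / 2 : ℝ) : ℂ) * u := by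
    have h1 : (starRingEnd ℂ) c * (a n * (r:ℂ) ^ n) / 2
        = ((‖a n‖ * r ^ n / 2 : ℝ) : ℂ) * u := by
      rw [show (starRingEnd ℂ) c * (a n * (r:ℂ) ^ n) / 2
        = ((starRingEnd ℂ) c * a n) * ((r:ℂ) ^ n / 2) from by ring, hcan]
      push_cast
      ring
    rw [h1]
    nth_rewrite 1 [hu0]
    push_cast
    ring
  have hnormval : ‖(((2*π:ℝ)) : ℂ) * (a 0 + (starRingEnd ℂ) c * (a n * r ^ n) / 2)‖
      = (2*π) * (‖a 0‖ + ‖a n‖ * r ^ n / 2) := by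
    rw [hval2, norm_mul, norm_mul, hu, mul_one, Complex.norm_real, Complex.norm_real,
      Real.norm_of_nonneg h2pi, Real.norm_of_nonneg (by positivity)]
  rw [hIval, hnormval] at hbound
  have hfin : (2*π) * (‖a 0‖ + ‖a n‖ * r ^ n / 2) ≤ (2*π) * 1 := by linarith
  exact le_of_mul_le_mul_left hfin (by positivity)

include hf hsum hb in
lemma coeff_bound (n : ℕ) (hn : 1 ≤ n) : ‖a n‖ ≤ 2 * (1 - ‖a 0‖) := by
  have key : ∀ r : ℝ, r ∈ Ioo (0:ℝ) 1 → ‖a n‖ * r ^ n ≤ 2 * (1 - ‖a 0‖) := by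
    intro r hr
    have := claim_bound hf hsum hb hr.1 hr.2 n hn
    linarith
  have htend : Tendsto (fun r : ℝ => ‖a n‖ * r ^ n) (nhdsWithin 1 (Iio 1)) (nhds (‖a n‖)) := by
    have hcont : Tendsto (fun r : ℝ => ‖a n‖ * r ^ n) (nhds 1) (nhds (‖a n‖ * 1 ^ n)) :=
      ((continuous_const.mul (continuous_pow n)).tendsto 1)
    simp only [one_pow, mul_one] at hcont
    exact hcont.mono_left nhdsWithin_le_nhds
  refine le_of_tendsto htend ?_
  filter_upwards [Ioo_mem_nhdsLT (by norm_num : (0:ℝ) < 1)] with r hr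
  exact key r hr

end helpers

end BohrProof

open BohrProof

/-- Bohr's theorem: if f = Σ aₙ zⁿ is analytic on the unit disk with
|f| < 1, then Σ |aₙ||z|ⁿ < 1 for |z| < 1/3. -/
theorem stmt18 (f : ℂ → ℂ) (a : ℕ → ℂ)
    (hf : DifferentiableOn ℂ f (Metric.ball 0 1))
    (hsum : ∀ z ∈ Metric.ball (0 : ℂ) 1, HasSum (fun n : ℕ => a n * z^n) (f z))
    (hb : ∀ z ∈ Metric.ball (0 : ℂ) 1, ‖f z‖ < 1) :
    ∀ z : ℂ, ‖z‖ < 1/3 →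
      ∃ S : ℝ, HasSum (fun n : ℕ => ‖a n‖ * ‖z‖^n) S ∧ S < 1 := by
  intro z hz
  have hfc : ContinuousOn f (Metric.ball 0 1) := hf.continuousOn
  obtain ⟨r, hr_def⟩ : ∃ r : ℝ, ‖z‖ = r := ⟨‖z‖, rfl⟩
  rw [hr_def] at hz ⊢
  have hr0 : 0 ≤ r := hr_def ▸ norm_nonneg z
  have hr13 : r < 1/3 := hz
  have hr1 : r < 1 := by linarith
  have hsummable : Summable (fun n => ‖a n‖ * r ^ n) := by
    apply summable_aux (a := a) ?_ r hr0 hr1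
    intro s hs0 hs1
    refine (hsum (s:ℂ) ?_).summable
    rw [mem_ball_zero_iff, Complex.norm_real, Real.norm_of_nonneg hs0.le]
    exact hs1
  refine ⟨∑' n, ‖a n‖ * r ^ n, hsummable.hasSum, ?_⟩
  -- a 0 = f 0 and ‖a 0‖ < 1
  have ha0 : a 0 = f 0 := by
    have h1 : HasSum (fun n : ℕ => a n * (0:ℂ)^n) (f 0) := hsum 0 (by simp)
    have h2 : HasSum (fun n : ℕ => a n * (0:ℂ)^n) (a 0) := by
      have := hasSum_single (f := fun n : ℕ => a n * (0:ℂ)^n) 0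
        (fun m hm => by simp [zero_pow hm])
      simpa using this
    exact (h2.unique h1)
  have hα : ‖a 0‖ < 1 := by
    rw [ha0]; exact hb 0 (by simp)
  obtain ⟨α, hα_def⟩ : ∃ α : ℝ, ‖a 0‖ = α := ⟨‖a 0‖, rfl⟩
  rw [hα_def] at hα
  -- split off the first term
  have hsplit : (∑' n, ‖a n‖ * r ^ n) = α + ∑' n, ‖a (n+1)‖ * r ^ (n+1) := by
    rw [hsummable.tsum_eq_zero_add]
    rw [← hα_def]
    simp
  rcases eq_or_lt_of_le hr0 with hr0' | hr0'
  · -- r = 0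
    have : (∑' n, ‖a (n+1)‖ * r ^ (n+1)) = 0 := by
      calc (∑' n, ‖a (n+1)‖ * r ^ (n+1)) = ∑' _ : ℕ, (0:ℝ) :=
            tsum_congr (fun n => by rw [← hr0']; simp)
        _ = 0 := tsum_zero
    rw [hsplit, this, add_zero]
    exact hα
  · -- 0 < r
    have htail : (∑' n, ‖a (n+1)‖ * r ^ (n+1)) ≤ 2 * (1 - α) * r * (1-r)⁻¹ := by
      have hle : ∀ n : ℕ, ‖a (n+1)‖ * r ^ (n+1) ≤ (2 * (1 - α) * r) * r ^ n := by
        intro n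
        have h1 : ‖a (n+1)‖ ≤ 2 * (1 - α) := hα_def ▸ coeff_bound hfc hsum hb (n+1) (by omega)
        have h2 : r ^ (n+1) = r * r ^ n := by ring
        rw [h2, ← mul_assoc]
        apply mul_le_mul_of_nonneg_right _ (pow_nonneg hr0 n)
        calc ‖a (n+1)‖ * r ≤ 2 * (1 - α) * r :=
          mul_le_mul_of_nonneg_right h1 hr0
        _ = 2 * (1 - α) * r := rfl
      calc (∑' n, ‖a (n+1)‖ * r ^ (n+1)) ≤ ∑' n, (2 * (1 - α) * r) * r ^ n := by
            apply Summable.tsum_le_tsum hle ((summable_nat_add_iff (f := fun n => ‖a n‖ * r^n) 1).mpr hsummable)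
            exact (summable_geometric_of_lt_one hr0 hr1).mul_left _
        _ = (2 * (1 - α) * r) * (1-r)⁻¹ := by
            rw [tsum_mul_left, tsum_geometric_of_lt_one hr0 hr1]
        _ = 2 * (1 - α) * r * (1-r)⁻¹ := by ring
    have hstrict : 2 * (1 - α) * r * (1-r)⁻¹ < 1 - α := by
      have h1r : (0:ℝ) < 1 - r := by linarith
      have hQ : (1-r) * (1-r)⁻¹ = 1 := mul_inv_cancel₀ (ne_of_gt h1r)
      have hQpos : (0:ℝ) < (1-r)⁻¹ := inv_pos.mpr h1r
      have hαpos : (0:ℝ) < 1 - α := by linarith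
      have h2 : 2 * r * (1-r)⁻¹ < 1 := by
        rw [show 2 * r * (1-r)⁻¹ = (2*r)/(1-r) from by ring, div_lt_one h1r]
        linarith
      calc 2 * (1 - α) * r * (1-r)⁻¹ = (1-α) * (2 * r * (1-r)⁻¹) := by ring
        _ < (1-α) * 1 := mul_lt_mul_of_pos_left h2 hαpos
        _ = 1 - α := mul_one _
    rw [hsplit]
    linarith
end
end
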